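/- Let (Φ_j)_{j≥0}, (Φ_ℓ)_{ℓ≥0} be sequences of m×N real matrices and (𝔣_u)_{u∈ℤ} a sequence of m×m matrices such that Σ_j ||Φ_j|| max(1,j)^{1/2} < ∞ and Σ_u ||𝔣_u|| max(1,|u|)^{1/2} < ∞. Define b_k := (1/(2π)) ∫_{-π}^{π} e^{-ikω} Φ(e^{iω})^⊤ η(ω) Φ(e^{-iω}) dω, where Φ(z) = Σ_j Φ_j z^j and η(ω) = Σ_u 𝔣_u e^{-iωu}. Then Σ_{k∈ℤ} ||b_k|| |k|^{1/2} < ∞. -/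

import Mathlib

open Matrix MeasureTheory
open scoped ENNReal NNReal

attribute [local instance] Matrix.frobeniusNormedAddCommGroup Matrix.frobeniusNormedSpace

noncomputable def E (t : ℤ) (ω : ℝ) : ℂ := Complex.exp (Complex.I * t * ω)

lemma norm_E (t : ℤ) (ω : ℝ) : ‖E t ω‖ = 1 := by
  rw [E, Complex.norm_exp]; simp

lemma abs_E (t : ℤ) (ω : ℝ) : ‖E t ω‖ = 1 := norm_E t ω

lemma nnnorm_E (t : ℤ) (ω : ℝ) : ‖E t ω‖₊ = 1 := NNReal.eq (norm_E t ω)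

lemma E_mul (s t : ℤ) (ω : ℝ) : E s ω * E t ω = E (s + t) ω := by
  rw [E, E, E, ← Complex.exp_add]; push_cast; ring_nf

lemma exp_int_pi (t : ℤ) : Complex.exp (Complex.I * t * Real.pi) = (-1 : ℂ) ^ t := by
  have : Complex.I * t * Real.pi = t * (Real.pi * Complex.I) := by ring
  rw [this, Complex.exp_int_mul, Complex.exp_pi_mul_I]

lemma neg_one_zpow_sq (t : ℤ) : ((-1 : ℂ) ^ t) * ((-1 : ℂ) ^ t) = 1 := by
  rw [← mul_zpow]; norm_num

lemma integral_exp_int (t : ℤ) :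
    (∫ ω in (-Real.pi)..Real.pi, Complex.exp (Complex.I * t * ω)) =
      if t = 0 then ((2 * Real.pi : ℝ) : ℂ) else 0 := by
  rcases eq_or_ne t 0 with h | h
  · subst h
    simp only [Int.cast_zero, mul_zero, zero_mul, Complex.exp_zero]
    rw [intervalIntegral.integral_const]
    push_cast
    simp [sub_neg_eq_add, two_mul]
  · have hc : Complex.I * t ≠ 0 := by
      simp [Complex.I_ne_zero, Complex.ext_iff]
      exact_mod_cast h
    simp only [mul_assoc] at *
    rw [if_neg h]
    have := integral_exp_mul_complex (a := -Real.pi) (b := Real.pi) hc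
    simp only [← mul_assoc] at this ⊢
    rw [this]
    have h1 : Complex.exp (Complex.I * t * (Real.pi : ℂ)) = (-1 : ℂ) ^ t := exp_int_pi t
    have h2 : Complex.exp (Complex.I * t * ((-Real.pi : ℝ) : ℂ)) = (-1 : ℂ) ^ (-t) := by
      push_cast
      have : Complex.I * t * (-(Real.pi : ℂ)) = ((-t : ℤ) : ℂ) * (Real.pi * Complex.I) := by
        push_cast; ring
      rw [this, Complex.exp_int_mul, Complex.exp_pi_mul_I]
    rw [h1, h2, _root_.zpow_neg, inv_eq_of_mul_eq_one_right (neg_one_zpow_sq t), sub_self,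
      zero_div]

noncomputable def mulRightCLM {a b c : ℕ} (B : Matrix (Fin b) (Fin c) ℂ) :
    Matrix (Fin a) (Fin b) ℂ →L[ℂ] Matrix (Fin a) (Fin c) ℂ :=
  LinearMap.toContinuousLinearMap
    { toFun := fun X => X * B
      map_add' := fun X Y => Matrix.add_mul X Y B
      map_smul' := fun r X => Matrix.smul_mul r X B }

@[simp] lemma mulRightCLM_apply {a b c : ℕ} (B : Matrix (Fin b) (Fin c) ℂ)
    (X : Matrix (Fin a) (Fin b) ℂ) : mulRightCLM B X = X * B := rfl

noncomputable def mulLeftCLM {a b c : ℕ} (A : Matrix (Fin a) (Fin b) ℂ) :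
    Matrix (Fin b) (Fin c) ℂ →L[ℂ] Matrix (Fin a) (Fin c) ℂ :=
  LinearMap.toContinuousLinearMap
    { toFun := fun X => A * X
      map_add' := fun X Y => Matrix.mul_add A X Y
      map_smul' := fun r X => Matrix.mul_smul A r X }

@[simp] lemma mulLeftCLM_apply {a b c : ℕ} (A : Matrix (Fin a) (Fin b) ℂ)
    (X : Matrix (Fin b) (Fin c) ℂ) : mulLeftCLM A X = A * X := rfl

noncomputable def transposeCLM {a b : ℕ} :
    Matrix (Fin a) (Fin b) ℂ →L[ℂ] Matrix (Fin b) (Fin a) ℂ :=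
  LinearMap.toContinuousLinearMap
    { toFun := Matrix.transpose
      map_add' := Matrix.transpose_add
      map_smul' := fun r X => Matrix.transpose_smul r X }

@[simp] lemma transposeCLM_apply {a b : ℕ} (X : Matrix (Fin a) (Fin b) ℂ) :
    transposeCLM X = Xᵀ := rfl

lemma tsum_triple {N m : ℕ} (x : ℕ → Matrix (Fin N) (Fin m) ℂ)
    (y : ℤ → Matrix (Fin m) (Fin m) ℂ) (z : ℕ → Matrix (Fin m) (Fin N) ℂ)
    (hx : Summable fun j => ‖x j‖) (hy : Summable fun u => ‖y u‖)
    (hz : Summable fun l => ‖z l‖) :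
    (∑' j, x j) * (∑' u, y u) * (∑' l, z l) =
      ∑' p : ℕ × ℤ × ℕ, x p.1 * y p.2.1 * z p.2.2 := by
  have hX : Summable x := .of_norm hx
  have hY : Summable y := .of_norm hy
  have hZ : Summable z := .of_norm hz
  have hnorm3 : Summable fun p : ℕ × ℤ × ℕ => ‖x p.1‖ * (‖y p.2.1‖ * ‖z p.2.2‖) :=
    hx.mul_of_nonneg (hy.mul_of_nonneg hz (fun _ => norm_nonneg _) fun _ => norm_nonneg _)
      (fun _ => norm_nonneg _) fun _ => mul_nonneg (norm_nonneg _) (norm_nonneg _)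
  have hbound : ∀ p : ℕ × ℤ × ℕ, ‖x p.1 * y p.2.1 * z p.2.2‖ ≤
      ‖x p.1‖ * (‖y p.2.1‖ * ‖z p.2.2‖) := by
    intro p
    calc ‖x p.1 * y p.2.1 * z p.2.2‖ ≤ ‖x p.1 * y p.2.1‖ * ‖z p.2.2‖ :=
          Matrix.frobenius_norm_mul _ _
      _ ≤ ‖x p.1‖ * ‖y p.2.1‖ * ‖z p.2.2‖ := by
          gcongr; exact Matrix.frobenius_norm_mul _ _
      _ = _ := by ring
  have hP : Summable fun p : ℕ × ℤ × ℕ => x p.1 * y p.2.1 * z p.2.2 :=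
    Summable.of_norm (Summable.of_nonneg_of_le (fun _ => norm_nonneg _) hbound hnorm3)
  rw [Summable.tsum_prod' hP fun j => hP.prod_factor j]
  have step1 : (∑' j, x j) * (∑' u, y u) * (∑' l, z l) =
      ∑' j, x j * (∑' u, y u) * (∑' l, z l) := by
    have := ((mulRightCLM (∑' l, z l)).comp (mulRightCLM (∑' u, y u))).map_tsum hX
    simpa using this
  rw [step1]
  congr 1; funext j
  have step2 : x j * (∑' u, y u) * (∑' l, z l) = ∑' u, x j * y u * (∑' l, z l) := by
    have := ((mulRightCLM (∑' l, z l)).comp (mulLeftCLM (x j))).map_tsum hY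
    simpa using this
  rw [step2]
  have hQ : Summable fun q : ℤ × ℕ => x j * y q.1 * z q.2 := hP.prod_factor j
  rw [Summable.tsum_prod' hQ fun u => hQ.prod_factor u]
  congr 1; funext u
  have := (mulLeftCLM (x j * y u)).map_tsum hZ
  simpa [Matrix.mul_assoc] using this

lemma key_expand {m N : ℕ} (Φ : ℕ → Matrix (Fin m) (Fin N) ℝ)
    (𝔣 : ℤ → Matrix (Fin m) (Fin m) ℂ)
    (hΦ' : Summable fun j => ‖Φ j‖) (h𝔣' : Summable fun u => ‖𝔣 u‖) (k : ℤ) (ω : ℝ) :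
    Complex.exp (-Complex.I * (k : ℂ) * (ω : ℂ)) •
      ((∑' j : ℕ, Complex.exp (Complex.I * (j : ℂ) * (ω : ℂ)) • (Φ j).map Complex.ofReal)ᵀ *
       (∑' u : ℤ, Complex.exp (-Complex.I * (u : ℂ) * (ω : ℂ)) • 𝔣 u) *
       (∑' j : ℕ, Complex.exp (-Complex.I * (j : ℂ) * (ω : ℂ)) • (Φ j).map Complex.ofReal)) =
    ∑' p : ℕ × ℤ × ℕ, E ((p.1 : ℤ) - p.2.1 - p.2.2 - k) ω •
      (((Φ p.1).map Complex.ofReal)ᵀ * 𝔣 p.2.1 * (Φ p.2.2).map Complex.ofReal) := by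
  have eA : ∀ j : ℕ, Complex.exp (Complex.I * (j : ℂ) * (ω : ℂ)) = E (j : ℤ) ω := by
    intro j; rw [E]; push_cast; ring_nf
  have eB : ∀ u : ℤ, Complex.exp (-Complex.I * (u : ℂ) * (ω : ℂ)) = E (-u) ω := by
    intro u; rw [E]; congr 1; push_cast; ring
  have eBn : ∀ j : ℕ, Complex.exp (-Complex.I * (j : ℂ) * (ω : ℂ)) = E (-(j : ℤ)) ω := by
    intro j; rw [E]; congr 1; push_cast; ring
  have eK : Complex.exp (-Complex.I * (k : ℂ) * (ω : ℂ)) = E (-k) ω := eB k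
  simp_rw [eB, eBn, eA]
  have hnx : Summable fun j : ℕ => ‖E (j : ℤ) ω • (Φ j).map Complex.ofReal‖ := by
    simpa [norm_smul, norm_E, abs_E, Matrix.frobenius_norm_map_eq _ _ Complex.norm_real] using hΦ'
  have hx : Summable fun j : ℕ => E (j : ℤ) ω • (Φ j).map Complex.ofReal :=
    .of_norm hnx
  have ht : (∑' j : ℕ, E (j : ℤ) ω • (Φ j).map Complex.ofReal)ᵀ =
      ∑' j : ℕ, E (j : ℤ) ω • ((Φ j).map Complex.ofReal)ᵀ := by
    simpa [Matrix.transpose_smul] using transposeCLM.map_tsum hx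
  rw [ht]
  have hnx' : Summable fun j : ℕ => ‖E (j : ℤ) ω • ((Φ j).map Complex.ofReal)ᵀ‖ := by
    simpa [norm_smul, norm_E, abs_E, Matrix.frobenius_norm_map_eq _ _ Complex.norm_real] using hΦ'
  have hny : Summable fun u : ℤ => ‖E (-u) ω • 𝔣 u‖ := by
    simpa [norm_smul, norm_E, abs_E] using h𝔣'
  have hnz : Summable fun l : ℕ => ‖E (-(l : ℤ)) ω • (Φ l).map Complex.ofReal‖ := by
    simpa [norm_smul, norm_E, abs_E, Matrix.frobenius_norm_map_eq _ _ Complex.norm_real] using hΦ'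
  rw [tsum_triple _ _ _ hnx' hny hnz]
  have hsum : Summable fun p : ℕ × ℤ × ℕ =>
      (E (p.1 : ℤ) ω • ((Φ p.1).map Complex.ofReal)ᵀ) * (E (-p.2.1) ω • 𝔣 p.2.1) *
        (E (-(p.2.2 : ℤ)) ω • (Φ p.2.2).map Complex.ofReal) := by
    apply Summable.of_norm
    apply Summable.of_nonneg_of_le (fun _ => norm_nonneg _)
      (fun p => (Matrix.frobenius_norm_mul _ _).trans
        (mul_le_mul_of_nonneg_right (Matrix.frobenius_norm_mul _ _) (norm_nonneg _)))
    have := (hnx'.mul_of_nonneg (hny.mul_of_nonneg hnz (fun _ => norm_nonneg _)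
      (fun _ => norm_nonneg _)) (fun _ => norm_nonneg _)
      (fun _ => mul_nonneg (norm_nonneg _) (norm_nonneg _)))
    apply this.congr
    intro p; ring
  rw [← Summable.tsum_const_smul _ hsum]
  apply tsum_congr
  intro p
  simp only [Matrix.smul_mul, Matrix.mul_smul, smul_smul, E_mul]
  congr 2
  ring

lemma integral_expand {N : ℕ} {ι : Type*} [Countable ι] (c : ι → Matrix (Fin N) (Fin N) ℂ)
    (n : ι → ℤ) (hc : Summable fun p => ‖c p‖) (k : ℤ) :
    (2 * Real.pi)⁻¹ • (∫ ω in (-Real.pi)..Real.pi, ∑' p, E (n p - k) ω • c p) =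
      ∑' p, if n p = k then c p else 0 := by
  have hle : -Real.pi ≤ Real.pi := by linarith [Real.pi_pos]
  rw [intervalIntegral.integral_of_le hle]
  rw [show (∫ ω in Set.Ioc (-Real.pi) Real.pi, ∑' p, E (n p - k) ω • c p) = ∑' p, ∫ ω in Set.Ioc (-Real.pi) Real.pi, E (n p - k) ω • c p from MeasureTheory.integral_tsum ?_ ?_]
  · have hint : ∀ p, (∫ ω in Set.Ioc (-Real.pi) Real.pi, E (n p - k) ω • c p) =
        (2 * Real.pi : ℝ) • (if n p = k then c p else 0) := by
      intro p
      rw [← intervalIntegral.integral_of_le hle, intervalIntegral.integral_smul_const]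
      unfold E
      rw [integral_exp_int]
      simp only [sub_eq_zero]
      split_ifs with h
      · exact Complex.coe_smul _ _
      · simp
    simp_rw [hint]
    have hite : Summable fun p => if n p = k then c p else 0 := by
      apply Summable.of_norm
      apply Summable.of_nonneg_of_le (fun _ => norm_nonneg _) _ hc
      intro p
      split_ifs <;> simp [norm_nonneg]
    rw [Summable.tsum_const_smul _ hite, smul_smul, inv_mul_cancel₀ (by positivity), one_smul]
  · intro p
    apply Continuous.aestronglyMeasurable
    refine Continuous.smul (f := fun ω => E (n p - k) ω) ?_ continuous_const
    unfold E
    fun_prop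
  · have h1 : ∀ p, ∫⁻ ω in Set.Ioc (-Real.pi) Real.pi, ‖E (n p - k) ω • c p‖₊ =
        (‖c p‖₊ : ℝ≥0∞) * ENNReal.ofReal (Real.pi - -Real.pi) := by
      intro p
      have : ∀ ω : ℝ, (‖E (n p - k) ω • c p‖₊ : ℝ≥0∞) = (‖c p‖₊ : ℝ≥0∞) := by
        intro ω; rw [nnnorm_smul, nnnorm_E, one_mul]
      simp_rw [this]
      rw [MeasureTheory.setLIntegral_const, Real.volume_Ioc]
    simp_rw [enorm_eq_nnnorm, h1]
    rw [ENNReal.tsum_mul_right]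
    apply ENNReal.mul_ne_top _ ENNReal.ofReal_ne_top
    rw [ENNReal.tsum_coe_ne_top_iff_summable]
    exact NNReal.summable_coe.mp (by simpa [coe_nnnorm] using hc)

lemma sqrt_weight_bound (j l : ℕ) (u k : ℤ) (h : (j : ℤ) - u - l = k) :
    Real.sqrt |(k : ℝ)| ≤ 3 * (Real.sqrt (max 1 (j : ℝ)) * Real.sqrt (max 1 |(u : ℝ)|) *
      Real.sqrt (max 1 (l : ℝ))) := by
  set a := max 1 (j : ℝ) with ha_def
  set bb := max 1 |(u : ℝ)| with hbb_def
  set d := max 1 (l : ℝ) with hd_def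
  have ha : 1 ≤ a := le_max_left _ _
  have hbb : 1 ≤ bb := le_max_left _ _
  have hd : 1 ≤ d := le_max_left _ _
  have h1 : (j : ℝ) ≤ a := le_max_right _ _
  have h2 : |(u : ℝ)| ≤ bb := le_max_right _ _
  have h3 : (l : ℝ) ≤ d := le_max_right _ _
  have h0 : (0 : ℝ) ≤ (j : ℝ) := Nat.cast_nonneg _
  have h0' : (0 : ℝ) ≤ (l : ℝ) := Nat.cast_nonneg _
  have hk : (k : ℝ) = (j : ℝ) - (u : ℝ) - (l : ℝ) := by
    rw [← h]; push_cast; ring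
  have habs' : |(k : ℝ)| ≤ (j : ℝ) + |(u : ℝ)| + (l : ℝ) := by
    rw [hk]
    calc |(j : ℝ) - (u : ℝ) - (l : ℝ)|
        ≤ |(j : ℝ) - (u : ℝ)| + |(l : ℝ)| := abs_sub _ _
      _ ≤ |(j : ℝ)| + |(u : ℝ)| + |(l : ℝ)| := by gcongr; exact abs_sub _ _
      _ = (j : ℝ) + |(u : ℝ)| + (l : ℝ) := by rw [abs_of_nonneg h0, abs_of_nonneg h0']
  have habs : |(k : ℝ)| ≤ 3 * (a * bb * d) := by
    have hbd : (1:ℝ) * 1 ≤ bb * d := mul_le_mul hbb hd zero_le_one (by linarith)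
    have had : (1:ℝ) * 1 ≤ a * d := mul_le_mul ha hd zero_le_one (by linarith)
    have hab : (1:ℝ) * 1 ≤ a * bb := mul_le_mul ha hbb zero_le_one (by linarith)
    have e1 : a ≤ a * bb * d := by nlinarith
    have e2 : bb ≤ a * bb * d := by nlinarith
    have e3 : d ≤ a * bb * d := by nlinarith
    linarith
  have hsq3 : Real.sqrt 3 ≤ 3 := by
    nlinarith [Real.sqrt_nonneg 3, Real.sq_sqrt (by norm_num : (0:ℝ) ≤ 3)]
  calc Real.sqrt |(k : ℝ)| ≤ Real.sqrt (3 * (a * bb * d)) := Real.sqrt_le_sqrt habs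
    _ = Real.sqrt 3 * (Real.sqrt a * Real.sqrt bb * Real.sqrt d) := by
        rw [Real.sqrt_mul (by norm_num : (0:ℝ) ≤ 3),
          Real.sqrt_mul (by nlinarith : (0:ℝ) ≤ a * bb),
          Real.sqrt_mul (by linarith : (0:ℝ) ≤ a)]
    _ ≤ 3 * (Real.sqrt a * Real.sqrt bb * Real.sqrt d) :=
        mul_le_mul_of_nonneg_right hsq3 (by positivity)

theorem stmt_8 {m N : ℕ}
    (Φ : ℕ → Matrix (Fin m) (Fin N) ℝ)
    (𝔣 : ℤ → Matrix (Fin m) (Fin m) ℂ)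
    (hΦ : Summable fun j : ℕ => ‖Φ j‖ * Real.sqrt (max 1 (j : ℝ)))
    (h𝔣 : Summable fun u : ℤ => ‖𝔣 u‖ * Real.sqrt (max 1 |(u : ℝ)|))
    (b : ℤ → Matrix (Fin N) (Fin N) ℂ)
    (hb : ∀ k : ℤ, b k = (2 * Real.pi)⁻¹ •
      ∫ ω in (-Real.pi)..Real.pi,
        Complex.exp (-Complex.I * (k : ℂ) * (ω : ℂ)) •
          ((∑' j : ℕ, Complex.exp (Complex.I * (j : ℂ) * (ω : ℂ)) • (Φ j).map Complex.ofReal)ᵀ *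
           (∑' u : ℤ, Complex.exp (-Complex.I * (u : ℂ) * (ω : ℂ)) • 𝔣 u) *
           (∑' j : ℕ, Complex.exp (-Complex.I * (j : ℂ) * (ω : ℂ)) • (Φ j).map Complex.ofReal))) :
    Summable fun k : ℤ => ‖b k‖ * Real.sqrt |(k : ℝ)| := by
  classical
  -- weights
  set g : ℕ × ℤ × ℕ → ℝ := fun p =>
    (‖Φ p.1‖ * Real.sqrt (max 1 (p.1 : ℝ))) *
      ((‖𝔣 p.2.1‖ * Real.sqrt (max 1 |(p.2.1 : ℝ)|)) *
       (‖Φ p.2.2‖ * Real.sqrt (max 1 (p.2.2 : ℝ)))) with hg_def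
  have hg0 : ∀ p, 0 ≤ g p := fun p => by positivity
  have hg : Summable g :=
    hΦ.mul_of_nonneg (h𝔣.mul_of_nonneg hΦ
        (fun u => by positivity) (fun j => by positivity))
      (fun j => by positivity) (fun q => mul_nonneg (by positivity) (by positivity))
  have one_le_sqrt : ∀ x : ℝ, 1 ≤ Real.sqrt (max 1 x) := by
    intro x
    have := Real.sqrt_le_sqrt (le_max_left 1 x)
    rwa [Real.sqrt_one] at this
  have hΦ' : Summable fun j : ℕ => ‖Φ j‖ := by
    apply Summable.of_nonneg_of_le (fun _ => norm_nonneg _) _ hΦ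
    intro j
    nth_rewrite 1 [← mul_one ‖Φ j‖]
    exact mul_le_mul_of_nonneg_left (one_le_sqrt _) (norm_nonneg _)
  have h𝔣' : Summable fun u : ℤ => ‖𝔣 u‖ := by
    apply Summable.of_nonneg_of_le (fun _ => norm_nonneg _) _ h𝔣
    intro u
    nth_rewrite 1 [← mul_one ‖𝔣 u‖]
    exact mul_le_mul_of_nonneg_left (one_le_sqrt _) (norm_nonneg _)
  -- the coefficients
  set c : ℕ × ℤ × ℕ → Matrix (Fin N) (Fin N) ℂ := fun p =>
    ((Φ p.1).map Complex.ofReal)ᵀ * 𝔣 p.2.1 * (Φ p.2.2).map Complex.ofReal with hc_def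
  set n : ℕ × ℤ × ℕ → ℤ := fun p => (p.1 : ℤ) - p.2.1 - p.2.2 with hn_def
  have hcnorm : ∀ p, ‖c p‖ ≤ ‖Φ p.1‖ * ‖𝔣 p.2.1‖ * ‖Φ p.2.2‖ := by
    intro p
    calc ‖c p‖ ≤ ‖((Φ p.1).map Complex.ofReal)ᵀ * 𝔣 p.2.1‖ * ‖(Φ p.2.2).map Complex.ofReal‖ :=
          Matrix.frobenius_norm_mul _ _
      _ ≤ ‖((Φ p.1).map Complex.ofReal)ᵀ‖ * ‖𝔣 p.2.1‖ * ‖(Φ p.2.2).map Complex.ofReal‖ := by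
          gcongr; exact Matrix.frobenius_norm_mul _ _
      _ = ‖Φ p.1‖ * ‖𝔣 p.2.1‖ * ‖Φ p.2.2‖ := by
          rw [Matrix.frobenius_norm_transpose,
            Matrix.frobenius_norm_map_eq _ _ Complex.norm_real,
            Matrix.frobenius_norm_map_eq _ _ Complex.norm_real]
  have hcg : ∀ p, ‖c p‖ ≤ g p := by
    intro p
    refine (hcnorm p).trans ?_
    have h1 : ‖Φ p.1‖ ≤ ‖Φ p.1‖ * Real.sqrt (max 1 (p.1 : ℝ)) :=
      le_mul_of_one_le_right (norm_nonneg _) (one_le_sqrt _)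
    have h2 : ‖𝔣 p.2.1‖ ≤ ‖𝔣 p.2.1‖ * Real.sqrt (max 1 |(p.2.1 : ℝ)|) :=
      le_mul_of_one_le_right (norm_nonneg _) (one_le_sqrt _)
    have h3 : ‖Φ p.2.2‖ ≤ ‖Φ p.2.2‖ * Real.sqrt (max 1 (p.2.2 : ℝ)) :=
      le_mul_of_one_le_right (norm_nonneg _) (one_le_sqrt _)
    calc ‖Φ p.1‖ * ‖𝔣 p.2.1‖ * ‖Φ p.2.2‖
        ≤ (‖Φ p.1‖ * Real.sqrt (max 1 (p.1 : ℝ))) *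
            (‖𝔣 p.2.1‖ * Real.sqrt (max 1 |(p.2.1 : ℝ)|)) *
            (‖Φ p.2.2‖ * Real.sqrt (max 1 (p.2.2 : ℝ))) := by
          apply mul_le_mul (mul_le_mul h1 h2 (norm_nonneg _) (by positivity)) h3
            (norm_nonneg _) (by positivity)
      _ = g p := by rw [hg_def]; ring
  have hc : Summable fun p => ‖c p‖ :=
    Summable.of_nonneg_of_le (fun _ => norm_nonneg _) hcg hg
  -- identification of b k
  have hbk : ∀ k : ℤ, b k = ∑' p, if n p = k then c p else 0 := by
    intro k
    rw [hb k]
    simp_rw [key_expand Φ 𝔣 hΦ' h𝔣' k]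
    exact integral_expand c n hc k
  -- fiberwise summability of the weights
  have hfib : Summable fun k : ℤ => ∑' (p : n ⁻¹' {k}), g p :=
    (hg.hasSum.tsum_fiberwise n).summable
  have hind : ∀ k : ℤ, (∑' p, if n p = k then g p else 0) = ∑' (p : n ⁻¹' {k}), g p := by
    intro k
    rw [tsum_subtype]
    apply tsum_congr
    intro p
    simp [Set.indicator_apply]
  have hgk : ∀ k : ℤ, Summable fun p => if n p = k then g p else 0 := by
    intro k
    apply Summable.of_nonneg_of_le (fun p => by positivity) _ hg
    intro p; split_ifs <;> simp [hg0 p]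
  have hck : ∀ k : ℤ, Summable fun p => if n p = k then ‖c p‖ else 0 := by
    intro k
    apply Summable.of_nonneg_of_le (fun p => by positivity) _ hg
    intro p; split_ifs with h
    · exact hcg p
    · exact hg0 p
  -- key pointwise coefficient bound
  have keybound : ∀ (k : ℤ) (p : ℕ × ℤ × ℕ), n p = k →
      ‖c p‖ * Real.sqrt |(k : ℝ)| ≤ 3 * g p := by
    intro k p hpk
    have hsqrt := sqrt_weight_bound p.1 p.2.2 p.2.1 k (by rw [← hpk, hn_def])
    calc ‖c p‖ * Real.sqrt |(k : ℝ)|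
        ≤ (‖Φ p.1‖ * ‖𝔣 p.2.1‖ * ‖Φ p.2.2‖) *
            (3 * (Real.sqrt (max 1 (p.1 : ℝ)) * Real.sqrt (max 1 |(p.2.1 : ℝ)|) *
              Real.sqrt (max 1 (p.2.2 : ℝ)))) :=
          mul_le_mul (hcnorm p) hsqrt (Real.sqrt_nonneg _) (by positivity)
      _ = 3 * g p := by rw [hg_def]; ring
  -- conclude
  refine Summable.of_nonneg_of_le (fun k => by positivity) (fun k => ?_) (hfib.mul_left 3)
  · 
    have hb1 : ‖b k‖ ≤ ∑' p, if n p = k then ‖c p‖ else 0 := by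
      rw [hbk k]
      have : ∀ p : ℕ × ℤ × ℕ, ‖if n p = k then c p else 0‖ =
          if n p = k then ‖c p‖ else 0 := by
        intro p; split_ifs <;> simp
      calc ‖∑' p, if n p = k then c p else 0‖ ≤ ∑' p, ‖if n p = k then c p else 0‖ :=
            norm_tsum_le_tsum_norm (by simpa [this] using hck k)
        _ = ∑' p, if n p = k then ‖c p‖ else 0 := tsum_congr this
    calc ‖b k‖ * Real.sqrt |(k : ℝ)|
        ≤ (∑' p, if n p = k then ‖c p‖ else 0) * Real.sqrt |(k : ℝ)| :=
          mul_le_mul_of_nonneg_right hb1 (Real.sqrt_nonneg _)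
      _ = ∑' p, (if n p = k then ‖c p‖ else 0) * Real.sqrt |(k : ℝ)| :=
          ((hck k).tsum_mul_right _).symm
      _ ≤ ∑' p, 3 * (if n p = k then g p else 0) := by
          apply Summable.tsum_le_tsum _ ((hck k).mul_right _) ((hgk k).mul_left 3)
          intro p
          split_ifs with h
          · exact keybound k p h
          · simp
      _ = 3 * ∑' p, (if n p = k then g p else 0) := tsum_mul_left
      _ = 3 * ∑' (p : n ⁻¹' {k}), g p := by rw [hind k]
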